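/- (Detailed balance for the smoothed Metropolis acceptance rule) Let α, η > 0 and define Φ(θ) := α^{-1} H(θ) + η^{-1} I_d for θ ∈ Int(K). Let f : Int(K) → ℝ be any function. For θ, z ∈ Int(K), define the proposal density factor p(θ, z) := √(det Φ(θ)) · exp(−‖z − θ‖²_{Φ(θ)}) and the acceptance probability a(θ, z) := (1 + √(det Φ(θ) / det Φ(z)))^{-1} · min( e^{f(θ) − f(z)} · e^{‖z − θ‖²_{Φ(θ)} − ‖z − θ‖²_{Φ(z)}}, 1 ). Then for all θ, z ∈ Int(K): a(θ, z) · p(θ, z) · e^{−f(θ)} = a(z, θ) · p(z, θ) · e^{−f(z)}. -/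

import Mathlib

open Matrix Real
open scoped BigOperators

/-- The Hessian of the log-barrier function for the polytope `{x | A x ≤ b}`. -/
noncomputable def logBarrierHessian {m d : ℕ} (A : Matrix (Fin m) (Fin d) ℝ) (b : Fin m → ℝ)
    (x : Fin d → ℝ) : Matrix (Fin d) (Fin d) ℝ :=
  ∑ i, ((b i - A.mulVec x i) ^ 2)⁻¹ • Matrix.vecMulVec (A i) (A i)

/-- The regularized ("soft-threshold") log-barrier Hessian `Φ(x) = α⁻¹ H(x) + η⁻¹ I_d`. -/
noncomputable def softPhi {m d : ℕ} (A : Matrix (Fin m) (Fin d) ℝ) (b : Fin m → ℝ)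
    (α η : ℝ) (x : Fin d → ℝ) : Matrix (Fin d) (Fin d) ℝ :=
  α⁻¹ • logBarrierHessian A b x + η⁻¹ • (1 : Matrix (Fin d) (Fin d) ℝ)


lemma my_sum_mulVec {m d : ℕ} (M : Fin m → Matrix (Fin d) (Fin d) ℝ) (v : Fin d → ℝ) :
    (∑ i, M i) *ᵥ v = ∑ i, (M i) *ᵥ v := by
  ext j
  simp [Matrix.mulVec, dotProduct, Matrix.sum_apply, Finset.sum_mul, Finset.sum_apply]
  exact Finset.sum_comm

lemma my_dot_sum {m d : ℕ} (v : Fin d → ℝ) (w : Fin m → (Fin d → ℝ)) :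
    v ⬝ᵥ (∑ i, w i) = ∑ i, v ⬝ᵥ w i := by
  simp [dotProduct, Finset.sum_apply, Finset.mul_sum]
  exact Finset.sum_comm

lemma quad_vecMulVec {d : ℕ} (u v : Fin d → ℝ) :
    v ⬝ᵥ (Matrix.vecMulVec u u).mulVec v = (u ⬝ᵥ v)^2 := by
  simp [Matrix.mulVec, dotProduct, vecMulVec_apply, Finset.mul_sum, Finset.sum_mul, pow_two]
  rw [Finset.sum_comm]
  congr 1; ext i; congr 1; ext j; ring

lemma softPhi_posDef {m d : ℕ} (A : Matrix (Fin m) (Fin d) ℝ) (b : Fin m → ℝ)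
    {α η : ℝ} (hα : 0 < α) (hη : 0 < η) (x : Fin d → ℝ) :
    (softPhi A b α η x).PosDef := by
  have hH : (logBarrierHessian A b x).PosSemidef := by
    rw [Matrix.posSemidef_iff_dotProduct_mulVec]
    constructor
    · show _ᴴ = _
      ext i j
      simp [logBarrierHessian, Matrix.sum_apply, vecMulVec_apply, mul_comm, mul_left_comm]
    · intro v
      simp only [star_trivial, logBarrierHessian]
      rw [my_sum_mulVec, my_dot_sum]
      refine Finset.sum_nonneg fun i _ => ?_
      rw [smul_mulVec, dotProduct_smul, smul_eq_mul, quad_vecMulVec]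
      positivity
  have hsmul : (α⁻¹ • logBarrierHessian A b x).PosSemidef := by
    rw [Matrix.posSemidef_iff_dotProduct_mulVec]
    constructor
    · show _ᴴ = _
      rw [conjTranspose_smul]
      simp only [star_trivial]
      rw [hH.1]
    · intro v
      rw [smul_mulVec, dotProduct_smul, smul_eq_mul]
      exact mul_nonneg (by positivity) (hH.dotProduct_mulVec_nonneg v)
  have hI : ((η⁻¹ : ℝ) • (1 : Matrix (Fin d) (Fin d) ℝ)).PosDef := by
    rw [show ((η⁻¹ : ℝ) • (1 : Matrix (Fin d) (Fin d) ℝ)) = Matrix.diagonal (fun _ => η⁻¹) by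
      ext i j; by_cases h : i = j <;> simp [h, Matrix.one_apply, Matrix.diagonal_apply]]
    exact Matrix.PosDef.diagonal fun i => by positivity
  exact Matrix.PosDef.posSemidef_add hsmul hI

lemma aux_det (s t : ℝ) (hs : 0 < s) (ht : 0 < t) :
    (1 + s / t)⁻¹ * s = (1 + t / s)⁻¹ * t := by
  field_simp
  ring

lemma aux_min (a b : ℝ) :
    min (Real.exp (a - b)) 1 * Real.exp (-a) = min (Real.exp (b - a)) 1 * Real.exp (-b) := by
  rcases le_total a b with h | h
  · rw [min_eq_left (Real.exp_le_one_iff.2 (by linarith)),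
        min_eq_right (Real.one_le_exp_iff.2 (by linarith)), ← Real.exp_add]
    ring_nf
  · rw [min_eq_right (Real.one_le_exp_iff.2 (by linarith)),
        min_eq_left (Real.exp_le_one_iff.2 (by linarith)), ← Real.exp_add]
    ring_nf

/-- The local norm `‖h‖_M = √(hᵀ M h)`. -/
noncomputable def mnorm {d : ℕ} (M : Matrix (Fin d) (Fin d) ℝ) (h : Fin d → ℝ) : ℝ :=
  Real.sqrt (h ⬝ᵥ M.mulVec h)

/-- The proposal density factor `p(θ, z) = √(det Φ(θ)) · exp(-‖z-θ‖²_{Φ(θ)})`. -/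
noncomputable def propDensity {m d : ℕ} (A : Matrix (Fin m) (Fin d) ℝ) (b : Fin m → ℝ)
    (α η : ℝ) (θ z : Fin d → ℝ) : ℝ :=
  Real.sqrt ((softPhi A b α η θ).det) * Real.exp (-(mnorm (softPhi A b α η θ) (z - θ)) ^ 2)

/-- The smoothed Metropolis acceptance probability
`a(θ, z) = (1 + √(det Φ(θ)/det Φ(z)))⁻¹ · min(e^{f(θ)-f(z)} e^{‖z-θ‖²_{Φ(θ)} - ‖z-θ‖²_{Φ(z)}}, 1)`. -/
noncomputable def acceptProb {m d : ℕ} (A : Matrix (Fin m) (Fin d) ℝ) (b : Fin m → ℝ)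
    (α η : ℝ) (f : (Fin d → ℝ) → ℝ) (θ z : Fin d → ℝ) : ℝ :=
  (1 + Real.sqrt ((softPhi A b α η θ).det / (softPhi A b α η z).det))⁻¹ *
    min (Real.exp (f θ - f z) *
      Real.exp ((mnorm (softPhi A b α η θ) (z - θ)) ^ 2 -
        (mnorm (softPhi A b α η z) (z - θ)) ^ 2)) 1

/-- **Detailed balance for the smoothed Metropolis acceptance rule.**
For all `θ, z ∈ Int K`:
`a(θ,z) p(θ,z) e^{-f(θ)} = a(z,θ) p(z,θ) e^{-f(z)}`. -/
theorem stmt15 {m d : ℕ} (A : Matrix (Fin m) (Fin d) ℝ) (b : Fin m → ℝ)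
    (hbdd : ∃ R : ℝ, ∀ w : Fin d → ℝ, (∀ i, A.mulVec w i ≤ b i) → ∀ j, |w j| ≤ R)
    (α η : ℝ) (hα : 0 < α) (hη : 0 < η) (f : (Fin d → ℝ) → ℝ) :
    ∀ θ z : Fin d → ℝ, (∀ i, A.mulVec θ i < b i) → (∀ i, A.mulVec z i < b i) →
      acceptProb A b α η f θ z * propDensity A b α η θ z * Real.exp (-f θ) =
        acceptProb A b α η f z θ * propDensity A b α η z θ * Real.exp (-f z) := by
  
  intro θ z hθ hz
  have hP := softPhi_posDef A b hα hη θ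
  have hQ := softPhi_posDef A b hα hη z
  have hdP : 0 < (softPhi A b α η θ).det := hP.det_pos
  have hdQ : 0 < (softPhi A b α η z).det := hQ.det_pos
  have hNP : 0 ≤ (z - θ) ⬝ᵥ (softPhi A b α η θ) *ᵥ (z - θ) := by
    simpa using hP.posSemidef.dotProduct_mulVec_nonneg (z - θ)
  have hNQ : 0 ≤ (z - θ) ⬝ᵥ (softPhi A b α η z) *ᵥ (z - θ) := by
    simpa using hQ.posSemidef.dotProduct_mulVec_nonneg (z - θ)
  set Nθ := (z - θ) ⬝ᵥ (softPhi A b α η θ) *ᵥ (z - θ) with hNθdef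
  set Nz := (z - θ) ⬝ᵥ (softPhi A b α η z) *ᵥ (z - θ) with hNzdef
  have hsub : θ - z = -(z - θ) := (neg_sub z θ).symm
  have e1 : mnorm (softPhi A b α η θ) (z - θ) ^ 2 = Nθ := Real.sq_sqrt hNP
  have e2 : mnorm (softPhi A b α η z) (z - θ) ^ 2 = Nz := Real.sq_sqrt hNQ
  have e3 : mnorm (softPhi A b α η θ) (θ - z) ^ 2 = Nθ := by
    rw [mnorm, hsub, Matrix.mulVec_neg, neg_dotProduct, dotProduct_neg, neg_neg]
    exact Real.sq_sqrt hNP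
  have e4 : mnorm (softPhi A b α η z) (θ - z) ^ 2 = Nz := by
    rw [mnorm, hsub, Matrix.mulVec_neg, neg_dotProduct, dotProduct_neg, neg_neg]
    exact Real.sq_sqrt hNQ
  simp only [acceptProb, propDensity, e1, e2, e3, e4]
  rw [← Real.exp_add, ← Real.exp_add,
      Real.sqrt_div hdP.le, Real.sqrt_div hdQ.le,
      show f θ - f z + (Nθ - Nz) = (f θ + Nθ) - (f z + Nz) from by ring,
      show f z - f θ + (Nz - Nθ) = (f z + Nz) - (f θ + Nθ) from by ring]
  set sP := Real.sqrt (softPhi A b α η θ).det with hsP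
  set sQ := Real.sqrt (softPhi A b α η z).det with hsQ
  have hsP0 : 0 < sP := Real.sqrt_pos.2 hdP
  have hsQ0 : 0 < sQ := Real.sqrt_pos.2 hdQ
  have key1 := aux_det sP sQ hsP0 hsQ0
  have key2 := aux_min (f θ + Nθ) (f z + Nz)
  calc (1 + sP / sQ)⁻¹ * min (Real.exp ((f θ + Nθ) - (f z + Nz))) 1 * (sP * Real.exp (-Nθ)) *
        Real.exp (-f θ)
      = ((1 + sP / sQ)⁻¹ * sP) *
          (min (Real.exp ((f θ + Nθ) - (f z + Nz))) 1 * Real.exp (-(f θ + Nθ))) := by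
        rw [neg_add, Real.exp_add]; ring
    _ = ((1 + sQ / sP)⁻¹ * sQ) *
          (min (Real.exp ((f z + Nz) - (f θ + Nθ))) 1 * Real.exp (-(f z + Nz))) := by
        rw [key1, key2]
    _ = (1 + sQ / sP)⁻¹ * min (Real.exp ((f z + Nz) - (f θ + Nθ))) 1 *
          (sQ * Real.exp (-Nz)) * Real.exp (-f z) := by
        rw [neg_add, Real.exp_add]; ring
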